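/- Let A be a commutative unital k-algebra and let α, β : H → A be unital algebra morphisms with α(w) = β(w) for every w ∈ N. Then (α ⋆ (β ∘ S))(w) = 0 for every w ∈ N. Consequently, the group of characters vanishing on N acts transitively on the set of characters whose restriction to N is any fixed prescribed partial character. -/

import Mathlib

open TensorProduct

/-- The convolution product of two linear maps from a bialgebra `H` to an algebra `A`:
`φ ⋆ ψ := m_A ∘ (φ ⊗ ψ) ∘ Δ`. -/
noncomputable def conv (k : Type*) {H A : Type*} [CommSemiring k] [Semiring H]
    [Bialgebra k H] [Semiring A] [Algebra k A] (φ ψ : H →ₗ[k] A) : H →ₗ[k] A :=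
  LinearMap.mul' k A ∘ₗ TensorProduct.map φ ψ ∘ₗ Coalgebra.comul

section Aux
open Coalgebra HopfAlgebra

variable {k H A : Type*} [Field k] [Ring H] [HopfAlgebra k H] [CommRing A] [Algebra k A]
variable {ι ι' : Type*}

lemma conv_apply (f g : H →ₗ[k] A) {a : H} (r : Coalgebra.Repr k a ι) :
    conv k f g a = ∑ i ∈ r.index, f (r.left i) * g (r.right i) := by
  simp only [conv, LinearMap.coe_comp, Function.comp_apply, ← r.eq, map_sum,
    TensorProduct.map_tmul, LinearMap.mul'_apply]

lemma sum_smul_left {a : H} (r : Coalgebra.Repr k a ι) :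
    ∑ i ∈ r.index, Coalgebra.counit (R := k) (r.right i) • r.left i = a := by
  have h := congrArg (TensorProduct.rid k H) (Coalgebra.sum_tmul_counit_eq r)
  rw [map_sum] at h
  simp only [TensorProduct.rid_tmul, one_smul] at h
  exact h

lemma sum_smul_right {a : H} (r : Coalgebra.Repr k a ι) :
    ∑ i ∈ r.index, Coalgebra.counit (R := k) (r.left i) • r.right i = a := by
  have h := congrArg (TensorProduct.lid k H) (Coalgebra.sum_counit_tmul_eq r)
  rw [map_sum] at h
  simp only [TensorProduct.lid_tmul, one_smul] at h
  exact h

lemma beta_sum1 (β : H →ₐ[k] A) {a : H} (r : Coalgebra.Repr k a ι) :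
    ∑ i ∈ r.index, β (r.left i) * β (antipode (R := k) (r.right i)) =
      algebraMap k A (counit (R := k) a) := by
  have h := congrArg β (HopfAlgebra.sum_mul_antipode_eq_algebraMap_counit (R := k) r)
  rw [map_sum] at h
  simp only [map_mul, AlgHom.commutes] at h
  exact h

lemma beta_sum2 (β : H →ₐ[k] A) {a : H} (r : Coalgebra.Repr k a ι) :
    ∑ i ∈ r.index, β (antipode (R := k) (r.left i)) * β (r.right i) =
      algebraMap k A (counit (R := k) a) := by
  have h := congrArg β (HopfAlgebra.sum_antipode_mul_eq_algebraMap_counit (R := k) r)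
  rw [map_sum] at h
  simp only [map_mul, AlgHom.commutes] at h
  exact h

lemma antipode_one' : antipode (R := k) (1 : H) = 1 := by
  have h := HopfAlgebra.mul_antipode_rTensor_comul_apply (R := k) (a := (1 : H))
  simpa [Bialgebra.comul_one, Algebra.TensorProduct.one_def] using h

/-- A representation of `comul (a*b)` built from representations of `comul a`, `comul b`. -/
noncomputable def reprMul {a b : H} (ra : Coalgebra.Repr k a ι) (rb : Coalgebra.Repr k b ι') :
    Coalgebra.Repr k (a * b) (ι × ι') where
  index := ra.index ×ˢ rb.index
  left := fun p => ra.left p.1 * rb.left p.2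
  right := fun p => ra.right p.1 * rb.right p.2
  eq := by
    rw [Finset.sum_product]
    rw [show (CoalgebraStruct.comul (R := k) (a * b) : H ⊗[k] H) =
      CoalgebraStruct.comul (R := k) a * CoalgebraStruct.comul (R := k) b from
        Bialgebra.comul_mul a b]
    rw [← ra.eq, ← rb.eq, Finset.sum_mul_sum]
    simp only [Algebra.TensorProduct.tmul_mul_tmul]

lemma triple_sum (f g h : H →ₗ[k] A) {a : H} (r : Coalgebra.Repr k a ι)
    (r1 : (i : ι) → Coalgebra.Repr k (r.left i) (H × H))
    (r2 : (i : ι) → Coalgebra.Repr k (r.right i) (H × H)) :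
    ∑ i ∈ r.index, ∑ j ∈ (r1 i).index,
        f ((r1 i).left j) * (g ((r1 i).right j) * h (r.right i)) =
    ∑ i ∈ r.index, ∑ j ∈ (r2 i).index,
        f (r.left i) * (g ((r2 i).left j) * h ((r2 i).right j)) := by
  have key := Coalgebra.sum_tmul_tmul_eq r r1 r2
  have := congrArg (LinearMap.mul' k A ∘ₗ
    TensorProduct.map f (LinearMap.mul' k A ∘ₗ TensorProduct.map g h)) key
  rw [map_sum, map_sum] at this
  simp only [map_sum, LinearMap.coe_comp, Function.comp_apply, TensorProduct.map_tmul,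
    LinearMap.mul'_apply] at this
  exact this

lemma starF (β : H →ₐ[k] A) {a b : H} (ra : Coalgebra.Repr k a ι) (rb : Coalgebra.Repr k b ι') :
    ∑ i ∈ ra.index, ∑ j ∈ rb.index,
        β (antipode (R := k) (ra.left i * rb.left j)) * β (ra.right i * rb.right j) =
      algebraMap k A (counit (R := k) a * counit (R := k) b) := by
  have h := beta_sum2 β (reprMul ra rb)
  rw [show (counit (R := k) (a * b) : k) = counit (R := k) a * counit (R := k) b from
    Bialgebra.counit_mul a b] at h
  rw [← h]
  exact (Finset.sum_product (s := ra.index) (t := rb.index) (f := fun (p : ι × ι') =>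
    β (antipode (R := k) (ra.left p.1 * rb.left p.2)) * β (ra.right p.1 * rb.right p.2))).symm

lemma starN (β : H →ₐ[k] A) {a b : H} (ra : Coalgebra.Repr k a ι) (rb : Coalgebra.Repr k b ι') :
    ∑ i ∈ ra.index, ∑ j ∈ rb.index,
        β (ra.left i * rb.left j) *
          (β (antipode (R := k) (ra.right i)) * β (antipode (R := k) (rb.right j))) =
      algebraMap k A (counit (R := k) a * counit (R := k) b) := by
  have ha := beta_sum1 β ra
  have hb := beta_sum1 β rb
  calc ∑ i ∈ ra.index, ∑ j ∈ rb.index,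
        β (ra.left i * rb.left j) *
          (β (antipode (R := k) (ra.right i)) * β (antipode (R := k) (rb.right j)))
      = ∑ i ∈ ra.index, ∑ j ∈ rb.index,
          (β (ra.left i) * β (antipode (R := k) (ra.right i))) *
            (β (rb.left j) * β (antipode (R := k) (rb.right j))) := by
        refine Finset.sum_congr rfl fun i _ => Finset.sum_congr rfl fun j _ => ?_
        rw [map_mul]; ring
    _ = (∑ i ∈ ra.index, β (ra.left i) * β (antipode (R := k) (ra.right i))) *
          (∑ j ∈ rb.index, β (rb.left j) * β (antipode (R := k) (rb.right j))) := by
        rw [Finset.sum_mul_sum]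
    _ = algebraMap k A (counit (R := k) a * counit (R := k) b) := by
        rw [ha, hb, map_mul]

lemma triple2 (β : H →ₐ[k] A) {x y : H} (rx : Coalgebra.Repr k x ι) (ry : Coalgebra.Repr k y ι')
    (rx1 : (i : ι) → Coalgebra.Repr k (rx.left i) (H × H))
    (rx2 : (i : ι) → Coalgebra.Repr k (rx.right i) (H × H))
    (ry1 : (j : ι') → Coalgebra.Repr k (ry.left j) (H × H))
    (ry2 : (j : ι') → Coalgebra.Repr k (ry.right j) (H × H)) :
    ∑ j ∈ ry.index, ∑ q ∈ (ry1 j).index, ∑ i ∈ rx.index, ∑ p ∈ (rx1 i).index,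
        β (antipode (R := k) ((rx1 i).left p * (ry1 j).left q)) *
          (β ((rx1 i).right p * (ry1 j).right q) *
            (β (antipode (R := k) (rx.right i)) * β (antipode (R := k) (ry.right j)))) =
    ∑ j ∈ ry.index, ∑ q ∈ (ry2 j).index, ∑ i ∈ rx.index, ∑ p ∈ (rx2 i).index,
        β (antipode (R := k) (rx.left i * ry.left j)) *
          (β ((rx2 i).left p * (ry2 j).left q) *
            (β (antipode (R := k) ((rx2 i).right p)) *
              (β (antipode (R := k) ((ry2 j).right q))))) := by
  have keyx := Coalgebra.sum_tmul_tmul_eq rx rx1 rx2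
  have keyy := Coalgebra.sum_tmul_tmul_eq ry ry1 ry2
  have key : (∑ i ∈ rx.index, ∑ p ∈ (rx1 i).index,
        (rx1 i).left p ⊗ₜ[k] ((rx1 i).right p ⊗ₜ[k] rx.right i)) ⊗ₜ[k]
      (∑ j ∈ ry.index, ∑ q ∈ (ry1 j).index,
        (ry1 j).left q ⊗ₜ[k] ((ry1 j).right q ⊗ₜ[k] ry.right j)) =
      (∑ i ∈ rx.index, ∑ p ∈ (rx2 i).index,
        rx.left i ⊗ₜ[k] ((rx2 i).left p ⊗ₜ[k] (rx2 i).right p)) ⊗ₜ[k]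
      (∑ j ∈ ry.index, ∑ q ∈ (ry2 j).index,
        ry.left j ⊗ₜ[k] ((ry2 j).left q ⊗ₜ[k] (ry2 j).right q)) := by
    rw [keyx, keyy]
  have h2 := congrArg (LinearMap.mul' k A ∘ₗ
      TensorProduct.map
        ((β.toLinearMap ∘ₗ antipode (R := k)) ∘ₗ LinearMap.mul' k H)
        (LinearMap.mul' k A ∘ₗ TensorProduct.map
          (β.toLinearMap ∘ₗ LinearMap.mul' k H)
          (LinearMap.mul' k A ∘ₗ TensorProduct.map
            (β.toLinearMap ∘ₗ antipode (R := k)) (β.toLinearMap ∘ₗ antipode (R := k)))) ∘ₗ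
      (LinearMap.lTensor (H ⊗[k] H) (tensorTensorTensorComm k H H H H).toLinearMap) ∘ₗ
      (tensorTensorTensorComm k H (H ⊗[k] H) H (H ⊗[k] H)).toLinearMap) key
  simp only [TensorProduct.sum_tmul, TensorProduct.tmul_sum, map_sum, LinearMap.coe_comp,
    Function.comp_apply, LinearEquiv.coe_coe, TensorProduct.tensorTensorTensorComm_tmul,
    LinearMap.lTensor_tmul, TensorProduct.map_tmul, LinearMap.mul'_apply,
    AlgHom.toLinearMap_apply] at h2
  exact h2

lemma sum_counit_smul_betaS (β : H →ₐ[k] A) {a : H} (r : Coalgebra.Repr k a ι) :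
    ∑ i ∈ r.index, counit (R := k) (r.left i) • β (antipode (R := k) (r.right i)) =
      β (antipode (R := k) a) := by
  conv_rhs => rw [← sum_smul_right r]
  simp only [map_sum, map_smul]

lemma betaS_mul (β : H →ₐ[k] A) (x y : H) :
    β (antipode (R := k) (x * y)) =
      β (antipode (R := k) x) * β (antipode (R := k) y) := by
  classical
  set rx := Coalgebra.Repr.arbitrary k x with hrx_def
  set ry := Coalgebra.Repr.arbitrary k y with hry_def
  set rx1 : (i : H × H) → Coalgebra.Repr k (rx.left i) (H × H) :=
    fun i => Coalgebra.Repr.arbitrary k (rx.left i) with hrx1_def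
  set rx2 : (i : H × H) → Coalgebra.Repr k (rx.right i) (H × H) :=
    fun i => Coalgebra.Repr.arbitrary k (rx.right i) with hrx2_def
  set ry1 : (j : H × H) → Coalgebra.Repr k (ry.left j) (H × H) :=
    fun j => Coalgebra.Repr.arbitrary k (ry.left j) with hry1_def
  set ry2 : (j : H × H) → Coalgebra.Repr k (ry.right j) (H × H) :=
    fun j => Coalgebra.Repr.arbitrary k (ry.right j) with hry2_def
  calc β (antipode (R := k) (x * y))
      = β (antipode (R := k)
          ((∑ i ∈ rx.index, counit (R := k) (rx.right i) • rx.left i) *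
           (∑ j ∈ ry.index, counit (R := k) (ry.right j) • ry.left j))) := by
        rw [sum_smul_left rx, sum_smul_left ry]
    _ = ∑ i ∈ rx.index, ∑ j ∈ ry.index,
          algebraMap k A (counit (R := k) (rx.right i) * counit (R := k) (ry.right j)) *
            β (antipode (R := k) (rx.left i * ry.left j)) := by
        rw [Finset.sum_mul_sum]
        simp only [map_sum]
        simp only [smul_mul_smul_comm]
        simp only [map_smul]
        simp only [Algebra.smul_def]
    _ = ∑ i ∈ rx.index, ∑ j ∈ ry.index,
          (∑ p ∈ (rx2 i).index, ∑ q ∈ (ry2 j).index,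
            β ((rx2 i).left p * (ry2 j).left q) *
              (β (antipode (R := k) ((rx2 i).right p)) *
                β (antipode (R := k) ((ry2 j).right q)))) *
            β (antipode (R := k) (rx.left i * ry.left j)) := by
        refine Finset.sum_congr rfl fun i _ => Finset.sum_congr rfl fun j _ => ?_
        rw [starN β (rx2 i) (ry2 j)]
    _ = ∑ i ∈ rx.index, ∑ j ∈ ry.index, ∑ p ∈ (rx2 i).index, ∑ q ∈ (ry2 j).index,
          β (antipode (R := k) (rx.left i * ry.left j)) *
            (β ((rx2 i).left p * (ry2 j).left q) *
              (β (antipode (R := k) ((rx2 i).right p)) *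
                (β (antipode (R := k) ((ry2 j).right q))))) := by
        refine Finset.sum_congr rfl fun i _ => Finset.sum_congr rfl fun j _ => ?_
        rw [Finset.sum_mul]
        refine Finset.sum_congr rfl fun p _ => ?_
        rw [Finset.sum_mul]
        refine Finset.sum_congr rfl fun q _ => ?_
        ring
    _ = ∑ j ∈ ry.index, ∑ q ∈ (ry2 j).index, ∑ i ∈ rx.index, ∑ p ∈ (rx2 i).index,
          β (antipode (R := k) (rx.left i * ry.left j)) *
            (β ((rx2 i).left p * (ry2 j).left q) *
              (β (antipode (R := k) ((rx2 i).right p)) *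
                (β (antipode (R := k) ((ry2 j).right q))))) := by
        rw [Finset.sum_comm]
        exact Finset.sum_congr rfl fun j _ =>
          ((Finset.sum_congr rfl fun i _ => Finset.sum_comm).trans Finset.sum_comm)
    _ = ∑ j ∈ ry.index, ∑ q ∈ (ry1 j).index, ∑ i ∈ rx.index, ∑ p ∈ (rx1 i).index,
          β (antipode (R := k) ((rx1 i).left p * (ry1 j).left q)) *
            (β ((rx1 i).right p * (ry1 j).right q) *
              (β (antipode (R := k) (rx.right i)) * β (antipode (R := k) (ry.right j)))) := by
        exact (triple2 β rx ry rx1 rx2 ry1 ry2).symm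
    _ = ∑ i ∈ rx.index, ∑ j ∈ ry.index, ∑ p ∈ (rx1 i).index, ∑ q ∈ (ry1 j).index,
          β (antipode (R := k) ((rx1 i).left p * (ry1 j).left q)) *
            (β ((rx1 i).right p * (ry1 j).right q) *
              (β (antipode (R := k) (rx.right i)) * β (antipode (R := k) (ry.right j)))) := by
        exact (Finset.sum_congr rfl fun j _ => Finset.sum_comm.trans
          (Finset.sum_congr rfl fun i _ => Finset.sum_comm)).trans Finset.sum_comm
    _ = ∑ i ∈ rx.index, ∑ j ∈ ry.index,
          (∑ p ∈ (rx1 i).index, ∑ q ∈ (ry1 j).index,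
            β (antipode (R := k) ((rx1 i).left p * (ry1 j).left q)) *
              β ((rx1 i).right p * (ry1 j).right q)) *
            (β (antipode (R := k) (rx.right i)) * β (antipode (R := k) (ry.right j))) := by
        refine Finset.sum_congr rfl fun i _ => Finset.sum_congr rfl fun j _ => ?_
        rw [Finset.sum_mul]
        refine Finset.sum_congr rfl fun p _ => ?_
        rw [Finset.sum_mul]
        refine Finset.sum_congr rfl fun q _ => ?_
        ring
    _ = ∑ i ∈ rx.index, ∑ j ∈ ry.index,
          algebraMap k A (counit (R := k) (rx.left i) * counit (R := k) (ry.left j)) *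
            (β (antipode (R := k) (rx.right i)) * β (antipode (R := k) (ry.right j))) := by
        refine Finset.sum_congr rfl fun i _ => Finset.sum_congr rfl fun j _ => ?_
        rw [starF β (rx1 i) (ry1 j)]
    _ = (∑ i ∈ rx.index, counit (R := k) (rx.left i) • β (antipode (R := k) (rx.right i))) *
          (∑ j ∈ ry.index, counit (R := k) (ry.left j) • β (antipode (R := k) (ry.right j))) := by
        rw [Finset.sum_mul_sum]
        refine Finset.sum_congr rfl fun i _ => Finset.sum_congr rfl fun j _ => ?_
        simp only [Algebra.smul_def, map_mul]
        ring
    _ = β (antipode (R := k) x) * β (antipode (R := k) y) := by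
        rw [sum_counit_smul_betaS β rx, sum_counit_smul_betaS β ry]

lemma sum_smul_apply_left (f : H →ₗ[k] A) {a : H} (r : Coalgebra.Repr k a ι) :
    ∑ i ∈ r.index, counit (R := k) (r.right i) • f (r.left i) = f a := by
  conv_rhs => rw [← sum_smul_left r]
  simp only [map_sum, map_smul]

lemma conv_one (f g : H →ₗ[k] A) (hf : f 1 = 1) (hg : g 1 = 1) : conv k f g 1 = 1 := by
  simp only [conv, LinearMap.coe_comp, Function.comp_apply, Bialgebra.comul_one,
    Algebra.TensorProduct.one_def, TensorProduct.map_tmul, hf, hg, LinearMap.mul'_apply, one_mul]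

lemma conv_mul_of (f g : H →ₗ[k] A) (hf : ∀ a b, f (a * b) = f a * f b)
    (hg : ∀ a b, g (a * b) = g a * g b) (x y : H) :
    conv k f g (x * y) = conv k f g x * conv k f g y := by
  classical
  set rx := Coalgebra.Repr.arbitrary k x
  set ry := Coalgebra.Repr.arbitrary k y
  calc conv k f g (x * y)
      = ∑ p ∈ rx.index ×ˢ ry.index,
          f (rx.left p.1 * ry.left p.2) * g (rx.right p.1 * ry.right p.2) :=
        conv_apply f g (reprMul rx ry)
    _ = ∑ i ∈ rx.index, ∑ j ∈ ry.index,
          f (rx.left i * ry.left j) * g (rx.right i * ry.right j) :=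
        Finset.sum_product (s := rx.index) (t := ry.index)
          (f := fun p => f (rx.left p.1 * ry.left p.2) * g (rx.right p.1 * ry.right p.2))
    _ = ∑ i ∈ rx.index, ∑ j ∈ ry.index,
          (f (rx.left i) * g (rx.right i)) * (f (ry.left j) * g (ry.right j)) := by
        refine Finset.sum_congr rfl fun i _ => Finset.sum_congr rfl fun j _ => ?_
        rw [hf, hg]; ring
    _ = (∑ i ∈ rx.index, f (rx.left i) * g (rx.right i)) *
          (∑ j ∈ ry.index, f (ry.left j) * g (ry.right j)) :=
        (Finset.sum_mul_sum _ _ _ _).symm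
    _ = conv k f g x * conv k f g y := by
        rw [conv_apply f g rx, conv_apply f g ry]

lemma conv_assoc (f g h : H →ₗ[k] A) :
    conv k (conv k f g) h = conv k f (conv k g h) := by
  ext a
  set r := Coalgebra.Repr.arbitrary k a
  set r1 : (i : H × H) → Coalgebra.Repr k (r.left i) (H × H) :=
    fun i => Coalgebra.Repr.arbitrary k (r.left i)
  set r2 : (i : H × H) → Coalgebra.Repr k (r.right i) (H × H) :=
    fun i => Coalgebra.Repr.arbitrary k (r.right i)
  calc conv k (conv k f g) h a
      = ∑ i ∈ r.index, conv k f g (r.left i) * h (r.right i) := conv_apply _ _ r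
    _ = ∑ i ∈ r.index, ∑ j ∈ (r1 i).index,
          f ((r1 i).left j) * (g ((r1 i).right j) * h (r.right i)) := by
        refine Finset.sum_congr rfl fun i _ => ?_
        rw [conv_apply f g (r1 i), Finset.sum_mul]
        exact Finset.sum_congr rfl fun j _ => mul_assoc _ _ _
    _ = ∑ i ∈ r.index, ∑ j ∈ (r2 i).index,
          f (r.left i) * (g ((r2 i).left j) * h ((r2 i).right j)) :=
        triple_sum f g h r r1 r2
    _ = ∑ i ∈ r.index, f (r.left i) * conv k g h (r.right i) := by
        refine Finset.sum_congr rfl fun i _ => ?_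
        rw [conv_apply g h (r2 i), Finset.mul_sum]
    _ = conv k f (conv k g h) a := (conv_apply _ _ r).symm

lemma conv_counit_right (f : H →ₗ[k] A) :
    conv k f (Algebra.linearMap k A ∘ₗ Coalgebra.counit) = f := by
  ext a
  set r := Coalgebra.Repr.arbitrary k a
  rw [conv_apply _ _ r]
  calc ∑ i ∈ r.index, f (r.left i) *
        (Algebra.linearMap k A ∘ₗ Coalgebra.counit) (r.right i)
      = ∑ i ∈ r.index, counit (R := k) (r.right i) • f (r.left i) := by
        refine Finset.sum_congr rfl fun i _ => ?_
        simp only [LinearMap.coe_comp, Function.comp_apply, Algebra.linearMap_apply]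
        rw [Algebra.smul_def]; ring
    _ = f a := sum_smul_apply_left f r

lemma convS_beta (β : H →ₐ[k] A) :
    conv k (β.toLinearMap ∘ₗ antipode (R := k)) β.toLinearMap =
      Algebra.linearMap k A ∘ₗ Coalgebra.counit := by
  ext a
  set r := Coalgebra.Repr.arbitrary k a
  rw [conv_apply _ _ r]
  simp only [LinearMap.coe_comp, Function.comp_apply, AlgHom.toLinearMap_apply,
    Algebra.linearMap_apply]
  exact beta_sum2 β r

lemma conv_beta_betaS (β : H →ₐ[k] A) (a : H) :
    conv k β.toLinearMap (β.toLinearMap ∘ₗ antipode (R := k)) a =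
      algebraMap k A (counit (R := k) a) := by
  set r := Coalgebra.Repr.arbitrary k a
  rw [conv_apply _ _ r]
  simp only [LinearMap.coe_comp, Function.comp_apply, AlgHom.toLinearMap_apply]
  exact beta_sum1 β r

end Aux

/-- if `α, β : H → A` are unital algebra morphisms into a commutative algebra
agreeing on the left coideal `N ⊆ ker ε`, then `(α ⋆ (β ∘ S))(w) = 0` for all `w ∈ N`.
Consequently the group of characters vanishing on `N` acts transitively on the set of
characters with a fixed restriction to `N`: there is a character `φ` vanishing on `N`
with `φ ⋆ β = α`. -/
theorem conv_antipode_transitive {k H A : Type*} [Field k] [Ring H] [HopfAlgebra k H]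
    [CommRing A] [Algebra k A] (N : Submodule k H)
    (hNcounit : ∀ x ∈ N, Coalgebra.counit (R := k) x = 0)
    (hNcoideal : ∀ x ∈ N,
      Coalgebra.comul (R := k) x - (1 : H) ⊗ₜ[k] x - x ⊗ₜ[k] (1 : H) ∈
        Submodule.span k {t : H ⊗[k] H | ∃ x' ∈ N, ∃ y : H, t = x' ⊗ₜ[k] y})
    (α β : H →ₐ[k] A) (hαβ : ∀ w ∈ N, α w = β w) :
    (∀ w ∈ N,
      conv k α.toLinearMap (β.toLinearMap ∘ₗ HopfAlgebra.antipode (R := k) (A := H)) w = 0) ∧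
    (∃ φ : H →ₐ[k] A, (∀ w ∈ N, φ w = 0) ∧
      conv k φ.toLinearMap β.toLinearMap = α.toLinearMap) := by
  set βS : H →ₗ[k] A := β.toLinearMap ∘ₗ HopfAlgebra.antipode (R := k) (A := H) with hβS_def
  -- Part 1
  have part1 : ∀ w ∈ N, conv k α.toLinearMap βS w = 0 := by
    intro w hw
    set f : H →ₗ[k] A := α.toLinearMap - β.toLinearMap with hf_def
    have hf1 : f (1 : H) = 0 := by
      simp [hf_def, LinearMap.sub_apply, map_one]
    have hfN : ∀ z ∈ N, f z = 0 := fun z hz => by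
      simp [hf_def, LinearMap.sub_apply, hαβ z hz]
    have hspan : TensorProduct.map f βS
        (Coalgebra.comul (R := k) w - (1 : H) ⊗ₜ[k] w - w ⊗ₜ[k] (1 : H)) = 0 := by
      refine Submodule.span_induction (p := fun t _ => TensorProduct.map f βS t = 0)
        ?_ ?_ ?_ ?_ (hNcoideal w hw)
      · rintro t ⟨x', hx', y, rfl⟩
        rw [TensorProduct.map_tmul, hfN x' hx', TensorProduct.zero_tmul]
      · exact map_zero _
      · intro u v _ _ hu hv; rw [map_add, hu, hv, add_zero]
      · intro c u _ hu; rw [map_smul, hu, smul_zero]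
    have hmapw : TensorProduct.map f βS (Coalgebra.comul (R := k) w) = 0 := by
      have hw' : Coalgebra.comul (R := k) w =
          (Coalgebra.comul (R := k) w - (1 : H) ⊗ₜ[k] w - w ⊗ₜ[k] (1 : H)) +
            (1 : H) ⊗ₜ[k] w + w ⊗ₜ[k] (1 : H) := by abel
      rw [hw', map_add, map_add, hspan, TensorProduct.map_tmul, TensorProduct.map_tmul,
        hf1, hfN w hw, TensorProduct.zero_tmul, TensorProduct.zero_tmul]
      simp
    have hαf : α.toLinearMap = f + β.toLinearMap := by
      rw [hf_def]; abel
    have step : conv k α.toLinearMap βS w = conv k β.toLinearMap βS w := by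
      simp only [conv, LinearMap.coe_comp, Function.comp_apply]
      rw [hαf, TensorProduct.map_add_left, LinearMap.add_apply, hmapw, map_add, map_zero,
        zero_add]
    rw [step, hβS_def, conv_beta_betaS β w, hNcounit w hw, map_zero]
  refine ⟨part1, ?_⟩
  -- Part 2
  have hβS_one : βS (1 : H) = 1 := by
    simp [hβS_def, antipode_one']
  have hβS_mul : ∀ a b : H, βS (a * b) = βS a * βS b := fun a b => by
    simpa [hβS_def] using betaS_mul β a b
  have hα_one : α.toLinearMap (1 : H) = 1 := map_one α
  have hα_mul : ∀ a b : H, α.toLinearMap (a * b) = α.toLinearMap a * α.toLinearMap b :=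
    fun a b => map_mul α a b
  set ℓ : H →ₗ[k] A := conv k α.toLinearMap βS with hℓ_def
  refine ⟨AlgHom.ofLinearMap ℓ (conv_one _ _ hα_one hβS_one)
    (conv_mul_of _ _ hα_mul hβS_mul), fun w hw => part1 w hw, ?_⟩
  show conv k ℓ β.toLinearMap = α.toLinearMap
  rw [hℓ_def, conv_assoc, hβS_def, convS_beta β, conv_counit_right]
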